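/- Suppose that for the solution ({x_n},{y_n}) there exist a constant M1 > 0 and a constant M2 ≥ 0 such that y_n ≤ M1·x_n + M2 for all n ∈ ℕ. Suppose further that A > 0 and that there exists a positive integer η such that for every sequence {c_m}_{m=1}^∞ with c_m ∈ I_β ∪ (I_γ \ I_C) for all m, there exist positive integers N1 ≤ N2 ≤ η with Σ_{m=N1}^{N2} c_m ∈ I_B. Then there exist M > 0 and N ∈ ℕ such that x_n ≤ M and y_n ≤ M for all n > N. -/

import Mathlib

open Finset

/-- The index set of the coefficient function `f` on `{1, …, k}`:
the set of indices `i ∈ {1, …, k}` with `f i > 0`. -/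
noncomputable def indexSet (k : ℕ) (f : ℕ → ℝ) : Finset ℕ :=
  (Finset.Icc 1 k).filter fun i => 0 < f i

/-- The iteration condition: for every sequence `c` (indexed by `1, 2, …`)
taking values in `S`, there exist positive integers `N1 ≤ N2 ≤ η` such that
`∑_{m=N1}^{N2} c m ∈ T`. -/
def iterCond (η : ℕ) (S T : Finset ℕ) : Prop :=
  ∀ c : ℕ → ℕ, (∀ m, 1 ≤ m → c m ∈ S) →
    ∃ N1 N2 : ℕ, 0 < N1 ∧ N1 ≤ N2 ∧ N2 ≤ η ∧ (∑ m ∈ Finset.Icc N1 N2, c m) ∈ T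

/-- Auxiliary recursively-defined bound sequence. -/
noncomputable def auxV (c1 ee : ℝ) : ℕ → ℝ
  | 0 => 0
  | d + 1 => c1 + ee * auxV c1 ee d

set_option maxHeartbeats 1000000 in
theorem stmt_14
    (k : ℕ) (hk : 0 < k)
    (α A p q : ℝ) (β γ B C δ ε D E : ℕ → ℝ)
    (hα : 0 ≤ α) (hA : 0 ≤ A) (hp : 0 ≤ p) (hq : 0 ≤ q)
    (hβ : ∀ i, 0 ≤ β i) (hγ : ∀ i, 0 ≤ γ i) (hB : ∀ j, 0 ≤ B j) (hC : ∀ j, 0 ≤ C j)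
    (hδ : ∀ i, 0 ≤ δ i) (hε : ∀ i, 0 ≤ ε i) (hD : ∀ j, 0 ≤ D j) (hE : ∀ j, 0 ≤ E j)
    (x y : ℕ → ℝ)
    (hxnn : ∀ n, 0 ≤ x n) (hynn : ∀ n, 0 ≤ y n)
    (hxden : ∀ n, k ≤ n →
      0 < A + ∑ j ∈ Icc 1 k, B j * x (n - j) + ∑ j ∈ Icc 1 k, C j * y (n - j))
    (hyden : ∀ n, k ≤ n →
      0 < q + ∑ j ∈ Icc 1 k, D j * x (n - j) + ∑ j ∈ Icc 1 k, E j * y (n - j))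
    (hxrec : ∀ n, k ≤ n → x n =
      (α + ∑ i ∈ Icc 1 k, β i * x (n - i) + ∑ i ∈ Icc 1 k, γ i * y (n - i)) /
      (A + ∑ j ∈ Icc 1 k, B j * x (n - j) + ∑ j ∈ Icc 1 k, C j * y (n - j)))
    (hyrec : ∀ n, k ≤ n → y n =
      (p + ∑ i ∈ Icc 1 k, δ i * x (n - i) + ∑ i ∈ Icc 1 k, ε i * y (n - i)) /
      (q + ∑ j ∈ Icc 1 k, D j * x (n - j) + ∑ j ∈ Icc 1 k, E j * y (n - j)))
    (M1 M2 : ℝ) (hM1 : 0 < M1) (hM2 : 0 ≤ M2)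
    (hcmp : ∀ n, y n ≤ M1 * x n + M2)
    (hApos : 0 < A)
    (hη : ∃ η : ℕ, 0 < η ∧
      iterCond η (indexSet k β ∪ (indexSet k γ \ indexSet k C)) (indexSet k B)) :
    ∃ M : ℝ, 0 < M ∧ ∃ N : ℕ, ∀ n, N < n → x n ≤ M ∧ y n ≤ M := by
  classical
  obtain ⟨η, hηpos, hiter⟩ := hη
  set S : Finset ℕ := indexSet k β ∪ (indexSet k γ \ indexSet k C) with hSdef
  set TB : Finset ℕ := indexSet k B with hTBdef
  have hmemS : ∀ i, i ∈ S ↔ (i ∈ Icc 1 k ∧ (0 < β i ∨ (0 < γ i ∧ ¬ 0 < C i))) := by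
    intro i
    simp only [hSdef, indexSet, Finset.mem_union, Finset.mem_sdiff, Finset.mem_filter]
    tauto
  have hmemTB : ∀ t, t ∈ TB ↔ (t ∈ Icc 1 k ∧ 0 < B t) := by
    intro t
    simp only [hTBdef, indexSet, Finset.mem_filter]
  have hSsub : S ⊆ Icc 1 k := fun i hi => ((hmemS i).1 hi).1
  -- the denominator function
  set Dm : ℕ → ℝ := fun m =>
    A + ∑ j ∈ Icc 1 k, B j * x (m - j) + ∑ j ∈ Icc 1 k, C j * y (m - j) with hDmdef
  have hDmA : ∀ m, A ≤ Dm m := by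
    intro m
    have h1 : (0:ℝ) ≤ ∑ j ∈ Icc 1 k, B j * x (m - j) :=
      Finset.sum_nonneg fun j _ => mul_nonneg (hB j) (hxnn _)
    have h2 : (0:ℝ) ≤ ∑ j ∈ Icc 1 k, C j * y (m - j) :=
      Finset.sum_nonneg fun j _ => mul_nonneg (hC j) (hynn _)
    simp only [hDmdef]
    linarith
  have hDmpos : ∀ m, 0 < Dm m := fun m => lt_of_lt_of_le hApos (hDmA m)
  have hxval : ∀ m, k ≤ m → x m =
      (α + ∑ i ∈ Icc 1 k, β i * x (m - i) + ∑ i ∈ Icc 1 k, γ i * y (m - i)) / Dm m := by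
    intro m hm
    exact hxrec m hm
  -- coefficients
  set e : ℕ → ℝ := fun i => β i + (if 0 < C i then 0 else M1 * γ i) with hedef
  have he : ∀ i, 0 ≤ e i := by
    intro i
    simp only [hedef]
    by_cases hCi : 0 < C i
    · simpa [hCi] using hβ i
    · simp only [if_neg hCi]
      exact add_nonneg (hβ i) (mul_nonneg hM1.le (hγ i))
  set g : ℕ → ℝ := fun i => γ i * M2 / A + (if 0 < C i then γ i / C i else 0) with hgdef
  have hg : ∀ i, 0 ≤ g i := by
    intro i
    simp only [hgdef]
    have h1 : 0 ≤ γ i * M2 / A := div_nonneg (mul_nonneg (hγ i) hM2) hA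
    by_cases hCi : 0 < C i
    · simp only [if_pos hCi]
      exact add_nonneg h1 (div_nonneg (hγ i) (hC i))
    · simpa [hCi] using h1
  set K0 : ℝ := α / A + ∑ i ∈ Icc 1 k, g i with hK0def
  have hK0 : 0 ≤ K0 := by
    have : (0:ℝ) ≤ ∑ i ∈ Icc 1 k, g i := Finset.sum_nonneg fun i _ => hg i
    have : (0:ℝ) ≤ α / A := by positivity
    simp only [hK0def]
    positivity
  -- the key one-step inequality
  have hkey : ∀ m, k ≤ m → x m ≤ K0 + ∑ i ∈ S, e i * (x (m - i) / Dm m) := by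
    intro m hm
    have hDp : (0:ℝ) < Dm m := hDmpos m
    have hterm : ∀ i ∈ Icc 1 k,
        (β i * x (m - i) + γ i * y (m - i)) / Dm m
          ≤ g i + (if i ∈ S then e i * (x (m - i) / Dm m) else 0) := by
      intro i hik
      have hxn : (0:ℝ) ≤ x (m - i) := hxnn _
      have hyn : (0:ℝ) ≤ y (m - i) := hynn _
      have hCyle : C i * y (m - i) ≤ Dm m := by
        have h1 : C i * y (m - i) ≤ ∑ j ∈ Icc 1 k, C j * y (m - j) :=
          Finset.single_le_sum (fun j _ => mul_nonneg (hC j) (hynn _)) hik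
        have h2 : (0:ℝ) ≤ ∑ j ∈ Icc 1 k, B j * x (m - j) :=
          Finset.sum_nonneg fun j _ => mul_nonneg (hB j) (hxnn _)
        simp only [hDmdef]
        linarith
      by_cases hCi : 0 < C i
      · -- C i > 0 : γ-part is absorbed; e i = β i
        have hge : g i = γ i * M2 / A + γ i / C i := by simp [hgdef, hCi]
        have hee : e i = β i := by simp [hedef, hCi]
        have hγpart : γ i * y (m - i) / Dm m ≤ γ i / C i := by
          rw [div_le_div_iff₀ hDp hCi]
          have h3 := mul_le_mul_of_nonneg_left hCyle (hγ i)
          linear_combination h3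
        have hβpart : β i * x (m - i) / Dm m
            ≤ (if i ∈ S then e i * (x (m - i) / Dm m) else 0) := by
          by_cases hiS : i ∈ S
          · rw [if_pos hiS, hee, mul_div_assoc]
          · have hβ0 : β i = 0 := by
              by_contra hne
              exact hiS ((hmemS i).2 ⟨hik, Or.inl (lt_of_le_of_ne (hβ i) (Ne.symm hne))⟩)
            rw [if_neg hiS, hβ0]
            simp
        have hM2nn : (0:ℝ) ≤ γ i * M2 / A := div_nonneg (mul_nonneg (hγ i) hM2) hA
        rw [add_div, hge]
        linarith
      · -- C i = 0 : use y ≤ M1 x + M2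
        have hge : g i = γ i * M2 / A := by simp [hgdef, hCi]
        have hee : e i = β i + M1 * γ i := by simp [hedef, hCi]
        have hycmp : y (m - i) ≤ M1 * x (m - i) + M2 := hcmp _
        have step1 : (β i * x (m - i) + γ i * y (m - i)) / Dm m
            ≤ ((β i + M1 * γ i) * x (m - i) + γ i * M2) / Dm m := by
          have : β i * x (m - i) + γ i * y (m - i)
              ≤ (β i + M1 * γ i) * x (m - i) + γ i * M2 := by
            have := mul_le_mul_of_nonneg_left hycmp (hγ i)
            nlinarith
          exact div_le_div_of_nonneg_right this hDp.le
        have step2 : ((β i + M1 * γ i) * x (m - i) + γ i * M2) / Dm m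
            = (β i + M1 * γ i) * (x (m - i) / Dm m) + γ i * M2 / Dm m := by
          rw [add_div, mul_div_assoc]
        have step3 : γ i * M2 / Dm m ≤ γ i * M2 / A :=
          div_le_div_of_nonneg_left (mul_nonneg (hγ i) hM2) hApos (hDmA m)
        have step4 : (β i + M1 * γ i) * (x (m - i) / Dm m)
            ≤ (if i ∈ S then e i * (x (m - i) / Dm m) else 0) := by
          by_cases hiS : i ∈ S
          · rw [if_pos hiS, hee]
          · have hβ0 : β i = 0 := by
              by_contra hne
              exact hiS ((hmemS i).2 ⟨hik, Or.inl (lt_of_le_of_ne (hβ i) (Ne.symm hne))⟩)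
            have hγ0 : γ i = 0 := by
              by_contra hne
              exact hiS ((hmemS i).2
                ⟨hik, Or.inr ⟨lt_of_le_of_ne (hγ i) (Ne.symm hne), hCi⟩⟩)
            rw [if_neg hiS, hβ0, hγ0]
            simp
        rw [hge]
        linarith
    calc x m = (α + ∑ i ∈ Icc 1 k, β i * x (m - i) + ∑ i ∈ Icc 1 k, γ i * y (m - i)) / Dm m :=
          hxval m hm
      _ = α / Dm m + ∑ i ∈ Icc 1 k, (β i * x (m - i) + γ i * y (m - i)) / Dm m := by
          rw [add_assoc, ← Finset.sum_add_distrib, add_div, Finset.sum_div]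
      _ ≤ α / A + ∑ i ∈ Icc 1 k, (g i + (if i ∈ S then e i * (x (m - i) / Dm m) else 0)) := by
          apply add_le_add
          · exact div_le_div_of_nonneg_left hα hApos (hDmA m)
          · exact Finset.sum_le_sum hterm
      _ = K0 + ∑ i ∈ S, e i * (x (m - i) / Dm m) := by
          rw [Finset.sum_add_distrib, Finset.sum_ite_mem,
            Finset.inter_eq_right.mpr hSsub, hK0def]
          ring
  -- constants for the iteration
  set Esum : ℝ := ∑ i ∈ S, e i with hEsumdef
  have hEsum : 0 ≤ Esum := Finset.sum_nonneg fun i _ => he i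
  set b0 : ℝ := if h : TB.Nonempty then TB.inf' h B else 1 with hb0def
  have hb0pos : 0 < b0 := by
    rw [hb0def]
    split
    · next h =>
      obtain ⟨t, ht, hteq⟩ := Finset.exists_mem_eq_inf' h B
      rw [hteq]
      exact ((hmemTB t).1 ht).2
    · exact one_pos
  have hb0le : ∀ t ∈ TB, b0 ≤ B t := by
    intro t ht
    rw [hb0def, dif_pos ⟨t, ht⟩]
    exact Finset.inf'_le B ht
  set Wp : ℝ := (max A⁻¹ 1) ^ η with hWpdef
  have hWple : ∀ r, r ≤ η → (A ^ r)⁻¹ ≤ Wp := by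
    intro r hr
    have h1 : (A ^ r)⁻¹ = (A⁻¹) ^ r := by rw [inv_pow]
    rw [h1, hWpdef]
    calc (A⁻¹) ^ r ≤ (max A⁻¹ 1) ^ r := by
          apply pow_le_pow_left₀ (by positivity) (le_max_left _ _)
      _ ≤ (max A⁻¹ 1) ^ η := by
          apply pow_le_pow_right₀ (le_max_right _ _) hr
  have hWp : 0 ≤ Wp := by
    rw [hWpdef]; positivity
  set C1 : ℝ := K0 * Wp + Esum * (Wp / b0) with hC1def
  have hC1 : 0 ≤ C1 := by
    rw [hC1def]
    have : 0 ≤ Wp / b0 := by positivity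
    positivity
  have hVnn : ∀ d, 0 ≤ auxV C1 Esum d := by
    intro d
    induction d with
    | zero => simp [auxV]
    | succ d ih =>
      simp only [auxV]
      positivity
  -- the main chain estimate
  have main : ∀ n, k * (η + 1) ≤ n → ∀ d r, r + d = η → ∀ c : ℕ → ℕ,
      (∀ m, 1 ≤ m → m ≤ r → c m ∈ S) →
      (∀ a b2, a < b2 → b2 ≤ r → (∑ m ∈ Ioc a b2, c m) ∉ TB) →
      x (n - ∑ m ∈ Ioc 0 r, c m) /
        (∏ j ∈ Finset.range r, Dm (n - ∑ m ∈ Ioc 0 j, c m)) ≤ auxV C1 Esum d := by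
    intro n hn d
    induction d with
    | zero =>
      intro r hr c hc hseg
      exfalso
      have hrη : r = η := by omega
      subst hrη
      have hc1 : c 1 ∈ S := hc 1 le_rfl hηpos
      rcases S.eq_empty_or_nonempty with hS | ⟨s0, hs0⟩
      · rw [hS] at hc1
        exact absurd hc1 (Finset.notMem_empty _)
      · set c' : ℕ → ℕ := fun m => if m ≤ r then c m else s0 with hc'def
        have hc'S : ∀ m, 1 ≤ m → c' m ∈ S := by
          intro m hm
          simp only [hc'def]
          split
          · next h => exact hc m hm h
          · exact hs0
        obtain ⟨N1, N2, hN1, hN12, hN2η, hmem⟩ := hiter c' hc'S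
        have hsum : ∑ m ∈ Finset.Icc N1 N2, c' m = ∑ m ∈ Finset.Icc N1 N2, c m := by
          apply Finset.sum_congr rfl
          intro m hm
          have hm2 : m ≤ r := le_trans (Finset.mem_Icc.1 hm).2 hN2η
          simp only [hc'def, if_pos hm2]
        have hIcc : Finset.Icc N1 N2 = Finset.Ioc (N1 - 1) N2 := by
          conv_lhs => rw [show N1 = (N1 - 1) + 1 by omega]
          exact Finset.Icc_add_one_left_eq_Ioc ..
        rw [hsum, hIcc] at hmem
        exact hseg (N1 - 1) N2 (by omega) hN2η hmem
    | succ d ih =>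
      intro r hr c hc hseg
      have hrlt : r < η := by omega
      -- sums of chain values are ≤ k * j
      have hsle : ∀ j, j ≤ r → (∑ m ∈ Ioc 0 j, c m) ≤ k * j := by
        intro j hj
        calc (∑ m ∈ Ioc 0 j, c m) ≤ ∑ _m ∈ Ioc 0 j, k := by
              apply Finset.sum_le_sum
              intro m hm
              have hm' := Finset.mem_Ioc.1 hm
              exact (Finset.mem_Icc.1 (hSsub (hc m hm'.1 (le_trans hm'.2 hj)))).2
          _ = k * j := by
              rw [Finset.sum_const, Nat.card_Ioc, smul_eq_mul, Nat.sub_zero, Nat.mul_comm]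
      set sr := ∑ m ∈ Ioc 0 r, c m with hsrdef
      have hsrk : sr ≤ k * r := hsle r le_rfl
      have hm0k : k ≤ n - sr := by
        have h1 : k * r ≤ k * η := Nat.mul_le_mul_left _ (le_of_lt hrlt)
        have h2 : k * (η + 1) = k * η + k := by ring
        omega
      set m0 := n - sr with hm0def
      have hQpos : (0:ℝ) < ∏ j ∈ Finset.range r, Dm (n - ∑ m ∈ Ioc 0 j, c m) :=
        Finset.prod_pos fun j _ => hDmpos _
      have hQA : A ^ r ≤ ∏ j ∈ Finset.range r, Dm (n - ∑ m ∈ Ioc 0 j, c m) := by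
        calc A ^ r = ∏ _j ∈ Finset.range r, A := by
              rw [Finset.prod_const, Finset.card_range]
          _ ≤ _ := Finset.prod_le_prod (fun j _ => hA) (fun j _ => hDmA _)
      set Qr := ∏ j ∈ Finset.range r, Dm (n - ∑ m ∈ Ioc 0 j, c m) with hQrdef
      -- bound each extension term
      have hterm : ∀ i ∈ S, x (m0 - i) / (Dm m0 * Qr) ≤ auxV C1 Esum d + Wp / b0 := by
        intro i hiS
        set c' : ℕ → ℕ := fun m => if m = r + 1 then i else c m with hc'def
        have hc'eq : ∀ m, m ≤ r → c' m = c m := by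
          intro m hm
          simp only [hc'def, if_neg (by omega : ¬ m = r + 1)]
        have hs'eq : ∀ j, j ≤ r → (∑ m ∈ Ioc 0 j, c' m) = ∑ m ∈ Ioc 0 j, c m := by
          intro j hj
          apply Finset.sum_congr rfl
          intro m hm
          exact hc'eq m (le_trans (Finset.mem_Ioc.1 hm).2 hj)
        have hs'top : (∑ m ∈ Ioc 0 (r + 1), c' m) = sr + i := by
          rw [Finset.sum_Ioc_succ_top (Nat.zero_le r), hs'eq r le_rfl]
          simp [hc'def, hsrdef]
        have hQ' : (∏ j ∈ Finset.range (r + 1), Dm (n - ∑ m ∈ Ioc 0 j, c' m))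
            = Qr * Dm m0 := by
          rw [Finset.prod_range_succ, hs'eq r le_rfl]
          congr 1
          apply Finset.prod_congr rfl
          intro j hj
          rw [hs'eq j (le_of_lt (Finset.mem_range.1 hj))]
        have hx' : m0 - i = n - ∑ m ∈ Ioc 0 (r + 1), c' m := by
          rw [hs'top, hm0def, Nat.sub_sub]
        by_cases hsegex : ∃ a2, a2 < r + 1 ∧ (∑ m ∈ Ioc a2 (r + 1), c' m) ∈ TB
        · -- a segment hits I_B : the denominator contains B t * x (m0 - i)
          obtain ⟨a2, ha2, htB⟩ := hsegex
          set t := ∑ m ∈ Ioc a2 (r + 1), c' m with htdef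
          have htk : t ∈ Icc 1 k := ((hmemTB t).1 htB).1
          have htBpos : 0 < B t := ((hmemTB t).1 htB).2
          have hsplit : (∑ m ∈ Ioc 0 a2, c' m) + t = sr + i := by
            have hcons := Finset.sum_Ioc_consecutive c' (Nat.zero_le a2) (le_of_lt ha2)
            rw [htdef, hcons, hs'top]
          have hidx : (n - ∑ m ∈ Ioc 0 a2, c' m) - t = m0 - i := by
            rw [Nat.sub_sub, hsplit, hm0def, Nat.sub_sub]
          -- the distinguished factor
          have hfac : B t * x (m0 - i) ≤ Dm (n - ∑ m ∈ Ioc 0 a2, c' m) := by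
            have h1 : B t * x ((n - ∑ m ∈ Ioc 0 a2, c' m) - t)
                ≤ ∑ j ∈ Icc 1 k, B j * x ((n - ∑ m ∈ Ioc 0 a2, c' m) - j) :=
              Finset.single_le_sum (fun j _ => mul_nonneg (hB j) (hxnn _)) htk
            have h2 : (0:ℝ) ≤ ∑ j ∈ Icc 1 k, C j * y ((n - ∑ m ∈ Ioc 0 a2, c' m) - j) :=
              Finset.sum_nonneg fun j _ => mul_nonneg (hC j) (hynn _)
            rw [hidx] at h1
            simp only [hDmdef]
            linarith
          -- Qr * Dm m0 ≥ A^r * (B t * x (m0 - i))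
          have ha2mem : a2 ∈ Finset.range (r + 1) := Finset.mem_range.2 ha2
          have herase : A ^ r ≤ ∏ j ∈ (Finset.range (r + 1)).erase a2,
              Dm (n - ∑ m ∈ Ioc 0 j, c' m) := by
            have hcard : ((Finset.range (r + 1)).erase a2).card = r := by
              rw [Finset.card_erase_of_mem ha2mem, Finset.card_range]
              omega
            calc A ^ r = ∏ _j ∈ (Finset.range (r + 1)).erase a2, A := by
                  rw [Finset.prod_const, hcard]
              _ ≤ _ := Finset.prod_le_prod (fun j _ => hA) (fun j _ => hDmA _)
          have hprod : A ^ r * (B t * x (m0 - i))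
              ≤ (∏ j ∈ Finset.range (r + 1), Dm (n - ∑ m ∈ Ioc 0 j, c' m)) := by
            calc A ^ r * (B t * x (m0 - i))
                ≤ (∏ j ∈ (Finset.range (r + 1)).erase a2,
                    Dm (n - ∑ m ∈ Ioc 0 j, c' m)) * (B t * x (m0 - i)) :=
                  mul_le_mul_of_nonneg_right herase
                    (mul_nonneg (le_of_lt htBpos) (hxnn _))
              _ ≤ (∏ j ∈ (Finset.range (r + 1)).erase a2,
                    Dm (n - ∑ m ∈ Ioc 0 j, c' m)) * Dm (n - ∑ m ∈ Ioc 0 a2, c' m) :=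
                  mul_le_mul_of_nonneg_left hfac
                    (le_trans (pow_nonneg hA r) herase)
              _ = _ := by
                  rw [mul_comm]
                  exact Finset.mul_prod_erase (Finset.range (r + 1))
                    (fun j => Dm (n - ∑ m ∈ Ioc 0 j, c' m)) ha2mem
          have hble2 : A ^ r * (B t * x (m0 - i)) ≤ Dm m0 * Qr := by
            calc A ^ r * (B t * x (m0 - i)) ≤ _ := hprod
              _ = Qr * Dm m0 := hQ'
              _ = Dm m0 * Qr := mul_comm _ _
          have hWb0 : (0:ℝ) ≤ Wp / b0 := div_nonneg hWp hb0pos.le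
          rcases eq_or_lt_of_le (hxnn (m0 - i)) with hx0 | hx0
          · rw [← hx0, zero_div]
            exact add_nonneg (hVnn d) hWb0
          · have hbpos : 0 < A ^ r * (B t * x (m0 - i)) :=
              mul_pos (pow_pos hApos r) (mul_pos htBpos hx0)
            have h1 := div_le_div_of_nonneg_left (hxnn (m0 - i)) hbpos hble2
            have hxne : x (m0 - i) ≠ 0 := ne_of_gt hx0
            have hAne : A ^ r ≠ 0 := ne_of_gt (pow_pos hApos r)
            have hBne : B t ≠ 0 := ne_of_gt htBpos
            have h2 : x (m0 - i) / (A ^ r * (B t * x (m0 - i)))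
                = (A ^ r)⁻¹ * (B t)⁻¹ := by
              field_simp
            have h3 : (A ^ r)⁻¹ * (B t)⁻¹ ≤ Wp * b0⁻¹ := by
              apply mul_le_mul (hWple r (le_of_lt hrlt))
                (inv_anti₀ hb0pos (hb0le t htB))
                (inv_nonneg.2 (hB t)) hWp
            have h4 : Wp * b0⁻¹ = Wp / b0 := (div_eq_mul_inv _ _).symm
            have h5 := hVnn d
            linarith
        · -- no segment : use the induction hypothesis with the extended chain
          push_neg at hsegex
          have happ := ih (r + 1) (by omega) c'
            (by
              intro m hm1 hm2
              rcases Nat.lt_or_ge m (r + 1) with hlt | hge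
              · rw [hc'eq m (by omega)]
                exact hc m hm1 (by omega)
              · have : m = r + 1 := by omega
                subst this
                simp only [hc'def, if_pos rfl]
                exact hiS)
            (by
              intro a b2 hab hb2
              rcases Nat.lt_or_ge b2 (r + 1) with hlt | hge
              · have hle : b2 ≤ r := by omega
                have : (∑ m ∈ Ioc a b2, c' m) = ∑ m ∈ Ioc a b2, c m := by
                  apply Finset.sum_congr rfl
                  intro m hm
                  exact hc'eq m (le_trans (Finset.mem_Ioc.1 hm).2 hle)
                rw [this]
                exact hseg a b2 hab hle
              · have : b2 = r + 1 := by omega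
                subst this
                exact hsegex a hab)
          rw [← hx', hQ'] at happ
          calc x (m0 - i) / (Dm m0 * Qr) = x (m0 - i) / (Qr * Dm m0) := by
                rw [mul_comm]
            _ ≤ auxV C1 Esum d := happ
            _ ≤ auxV C1 Esum d + Wp / b0 := by
                have h0 : (0:ℝ) ≤ Wp / b0 := div_nonneg hWp hb0pos.le
                linarith
      -- assemble
      have hxm0 := hkey m0 hm0k
      have hdiv := div_le_div_of_nonneg_right hxm0 hQpos.le
      have hsplit2 : (K0 + ∑ i ∈ S, e i * (x (m0 - i) / Dm m0)) / Qr
          = K0 / Qr + ∑ i ∈ S, e i * (x (m0 - i) / (Dm m0 * Qr)) := by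
        rw [add_div, Finset.sum_div]
        congr 1
        apply Finset.sum_congr rfl
        intro i _
        rw [mul_div_assoc, div_div]
      rw [hsplit2] at hdiv
      have hK0Q : K0 / Qr ≤ K0 * Wp := by
        have h1 : K0 / Qr ≤ K0 / A ^ r :=
          div_le_div_of_nonneg_left hK0 (pow_pos hApos r) hQA
        have h2 : K0 / A ^ r = K0 * (A ^ r)⁻¹ := div_eq_mul_inv _ _
        have h3 : K0 * (A ^ r)⁻¹ ≤ K0 * Wp :=
          mul_le_mul_of_nonneg_left (hWple r hrlt.le) hK0
        linarith
      have hsum2 : ∑ i ∈ S, e i * (x (m0 - i) / (Dm m0 * Qr))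
          ≤ Esum * (auxV C1 Esum d + Wp / b0) := by
        rw [hEsumdef, Finset.sum_mul]
        apply Finset.sum_le_sum
        intro i hi
        exact mul_le_mul_of_nonneg_left (hterm i hi) (he i)
      have hVd1 : auxV C1 Esum (d + 1) = C1 + Esum * auxV C1 Esum d := by
        simp [auxV]
      have hexp : Esum * (auxV C1 Esum d + Wp / b0)
          = Esum * auxV C1 Esum d + Esum * (Wp / b0) := by ring
      rw [hVd1, hC1def]
      linarith
  -- conclusion
  set Vf : ℝ := auxV C1 Esum η with hVfdef
  have hVf : 0 ≤ Vf := hVnn η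
  refine ⟨max Vf (M1 * Vf + M2) + 1, ?_, k * (η + 1), ?_⟩
  · have h2 : 0 ≤ M1 * Vf + M2 := add_nonneg (mul_nonneg hM1.le hVf) hM2
    have h3 := le_max_left Vf (M1 * Vf + M2)
    linarith
  · intro n hn
    have hxb : x n ≤ Vf := by
      have hm := main n (by omega) η 0 (by omega) (fun _ => 0)
        (fun m hm1 hm2 => absurd (hm1.trans hm2) (by omega))
        (fun a b2 hab hb2 => absurd (lt_of_lt_of_le hab hb2) (Nat.not_lt_zero a))
      simpa using hm
    have hmax1 := le_max_left Vf (M1 * Vf + M2)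
    have hmax2 := le_max_right Vf (M1 * Vf + M2)
    constructor
    · linarith
    · have h2 : M1 * x n ≤ M1 * Vf := mul_le_mul_of_nonneg_left hxb hM1.le
      have h3 := hcmp n
      linarith
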